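/- (Theorem 3, direction 2 ⇒ 1.) Suppose that for every choice of ρ_0,…,ρ_j ∈ {0,…,n} satisfying Σ_{i=0}^{t} ρ_i ≤ k(t+1) for all 0 ≤ t ≤ j and Σ_{i=0}^{j} ρ_i = k(j+1), and for every choice of matrices A*_t ∈ K^{n×ρ_t} of rank ρ_t (0 ≤ t ≤ j), the k(j+1)×k(j+1) matrix G^EX_j · diag(A*_0,…,A*_j) over F is invertible. Then d_R(j) = (n−k)(j+1)+1. -/

import Mathlib

open Matrix

/-- The rank of a vector over the extension field `F`: the `K`-dimension of the
`K`-subspace of `F` spanned by its entries. -/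
noncomputable def vrank (K : Type*) [Field K] {F : Type*} [Field F] [Algebra K F]
    {n : ℕ} (x : Fin n → F) : ℕ :=
  Module.finrank K (Submodule.span K (Set.range x))

/-- Channel packet `x_t = ∑_{i=0}^{min(t,m)} s_{t-i} G_i` (with `G i = 0` for `i > m`). -/
noncomputable def packet {F : Type*} [Field F] {k n : ℕ}
    (G : ℕ → Matrix (Fin k) (Fin n) F) (s : ℕ → Fin k → F) (t : ℕ) : Fin n → F :=
  ∑ i ∈ Finset.range (t + 1), Matrix.vecMul (s (t - i)) (G i)

/-- The `j`-th column sum rank distance. -/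
noncomputable def dR (K : Type*) [Field K] {F : Type*} [Field F] [Algebra K F]
    {k n : ℕ} (G : ℕ → Matrix (Fin k) (Fin n) F) (j : ℕ) : ℕ :=
  sInf {d : ℕ | ∃ s : ℕ → Fin k → F, s 0 ≠ 0 ∧
    d = ∑ t ∈ Finset.range (j + 1), vrank K (packet G s t)}

/-- The extended generator matrix `G^EX_j`: block matrix whose `(a,b)` block is
`G_{b−a}` for `a ≤ b` and `0` for `a > b`. -/
noncomputable def GEX {F : Type*} [Field F] {k n : ℕ}
    (G : ℕ → Matrix (Fin k) (Fin n) F) (j : ℕ) :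
    Matrix (Fin (j + 1) × Fin k) (Fin (j + 1) × Fin n) F :=
  Matrix.of fun p c => if (p.1 : ℕ) ≤ (c.1 : ℕ) then G ((c.1 : ℕ) - (p.1 : ℕ)) p.2 c.2 else 0

/-- The block diagonal matrix `diag(A*_0,…,A*_j)` with blocks `A*_t ∈ K^{n×ρ_t}`. -/
def blockDiag {K : Type*} [Field K] {n j : ℕ} {ρ : Fin (j + 1) → ℕ}
    (A : (t : Fin (j + 1)) → Matrix (Fin n) (Fin (ρ t)) K) :
    Matrix (Fin (j + 1) × Fin n) ((t : Fin (j + 1)) × Fin (ρ t)) K :=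
  Matrix.of fun p c => if p.1 = c.1 then A c.1 p.2 c.2 else 0

/-! ### Auxiliary lemmas -/

section Aux

lemma vecMul_apply' {α m n' : Type*} [Fintype m] [NonUnitalNonAssocSemiring α]
    (v : m → α) (M : Matrix m n' α) (c : n') :
    Matrix.vecMul v M c = ∑ i, v i * M i c := rfl

variable {K : Type*} [Field K] {F : Type*} [Field F] [Algebra K F]

lemma vrank_le_of_zeros {n : ℕ} (x : Fin n → F) (S : Finset (Fin n))
    (hx : ∀ i ∈ S, x i = 0) : vrank K x ≤ n - S.card := by
  classical
  have hsub : Set.range x ⊆ insert (0:F) ↑(Sᶜ.image x) := by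
    rintro _ ⟨i, rfl⟩
    by_cases hi : i ∈ S
    · simp [hx i hi]
    · exact Set.mem_insert_iff.2 (Or.inr (by simp; exact ⟨i, hi, rfl⟩))
  have h1 : Submodule.span K (Set.range x) ≤ Submodule.span K ↑(Sᶜ.image x) := by
    refine le_trans (Submodule.span_mono hsub) ?_
    rw [Submodule.span_insert_zero]
  calc vrank K x
      ≤ Module.finrank K (Submodule.span K (↑(Sᶜ.image x) : Set F)) := by
        have : FiniteDimensional K (Submodule.span K (↑(Sᶜ.image x) : Set F)) := by
          apply FiniteDimensional.span_of_finite
          exact (Sᶜ.image x).finite_toSet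
        exact Submodule.finrank_mono h1
    _ ≤ (Sᶜ.image x).card := finrank_span_finset_le_card _
    _ ≤ Sᶜ.card := Finset.card_image_le
    _ = n - S.card := by simp [Finset.card_compl]

lemma vrank_le_n {n : ℕ} (x : Fin n → F) : vrank K x ≤ n := by
  have := vrank_le_of_zeros (K := K) x ∅ (by simp)
  simpa using this

lemma exists_invertible_submatrix {k n : ℕ}
    (B : Matrix (Fin k) (Fin n) F) (hB : B.rank = k) :
    ∃ φ : Fin k → Fin n, Function.Injective φ ∧
      IsUnit (Matrix.of fun a l : Fin k => B a (φ l)) := by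
  classical
  have hspan : Submodule.span F (Set.range Bᵀ) = ⊤ := by
    apply Submodule.eq_top_of_finrank_eq
    rw [show Set.range Bᵀ = Set.range B.col from rfl, ← Matrix.rank_eq_finrank_span_cols, hB, Module.finrank_pi]
    simp
  obtain ⟨s, hs_sub, hs_span, hs_li⟩ := exists_linearIndependent F (Set.range Bᵀ)
  rw [hspan] at hs_span
  have hfin : s.Finite := hs_li.setFinite
  have : Fintype s := hfin.fintype
  have hcard : s.toFinset.card = k := by
    have h1 := finrank_span_set_eq_card hs_li
    rw [hs_span] at h1
    rw [← h1, finrank_top, Module.finrank_pi]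
    simp
  have hcard' : Fintype.card s = k := by rwa [Set.toFinset_card] at hcard
  let ψ : Fin k ≃ s := (Fintype.equivFinOfCardEq hcard').symm
  have hpre : ∀ l : Fin k, ∃ c : Fin n, Bᵀ c = (ψ l).1 :=
    fun l => hs_sub (ψ l).2
  choose φ hφ using hpre
  refine ⟨φ, ?_, ?_⟩
  · intro l1 l2 h12
    have : (ψ l1).1 = (ψ l2).1 := by
      rw [← hφ l1, ← hφ l2, h12]
    exact ψ.injective (Subtype.ext this)
  · rw [← Matrix.linearIndependent_cols_iff_isUnit]
    have : (fun l : Fin k => (Matrix.of fun a l : Fin k => B a (φ l))ᵀ l)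
        = fun l => (ψ l).1 := by
      funext l
      rw [← hφ l]
      rfl
    rw [show (Matrix.of fun a l : Fin k => B a (φ l)).col = fun l => (ψ l).1 from this]
    exact hs_li.comp (fun l => ψ l) (fun a b hab => ψ.injective hab)

lemma rank_of_li_cols {n ρ : ℕ} (A : Matrix (Fin n) (Fin ρ) K)
    (h : LinearIndependent K (fun l => Aᵀ l)) : A.rank = ρ := by
  rw [Matrix.rank_eq_finrank_span_cols, show A.col = fun l => Aᵀ l from rfl, finrank_span_eq_card h, Fintype.card_fin]

lemma exists_annihilator {n ρ : ℕ} (x : Fin n → F)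
    (hρ : ρ + vrank K x ≤ n) :
    ∃ A : Matrix (Fin n) (Fin ρ) K, A.rank = ρ ∧
      ∀ l, ∑ i, x i * algebraMap K F (A i l) = 0 := by
  classical
  let f : (Fin n → K) →ₗ[K] F := Fintype.linearCombination K x
  have hker : ρ ≤ Module.finrank K (LinearMap.ker f) := by
    have h1 := LinearMap.finrank_range_add_finrank_ker f
    have h2 : LinearMap.range f = Submodule.span K (Set.range x) :=
      Fintype.range_linearCombination K x
    rw [h2, Module.finrank_pi] at h1
    simp only [Fintype.card_fin] at h1
    have h3 : vrank K x = Module.finrank K (Submodule.span K (Set.range x)) := rfl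
    omega
  let b := Module.finBasis K (LinearMap.ker f)
  let col : Fin ρ → (Fin n → K) := fun l => (b (Fin.castLE hker l)).1
  have hli : LinearIndependent K col := by
    have := (b.linearIndependent.comp (Fin.castLE hker) (Fin.castLE_injective hker))
    exact this.map' (LinearMap.ker f).subtype (Submodule.ker_subtype _)
  refine ⟨Matrix.of fun i l => col l i, ?_, ?_⟩
  · apply rank_of_li_cols
    exact hli
  · intro l
    have hmem : col l ∈ LinearMap.ker f := (b (Fin.castLE hker l)).2
    have h0 : f (col l) = 0 := hmem
    rw [Fintype.linearCombination_apply] at h0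
    rw [← h0]
    congr 1
    funext i
    show x i * algebraMap K F (col l i) = col l i • x i
    rw [Algebra.smul_def]
    ring

lemma rank_selection {n k' : ℕ} (φ : Fin k' → Fin n)
    (hφ : Function.Injective φ) :
    (Matrix.of fun (i : Fin n) (l : Fin k') => if i = φ l then (1:K) else 0).rank = k' := by
  classical
  apply rank_of_li_cols
  have h : (fun l => (Matrix.of fun (i : Fin n) (l : Fin k') => if i = φ l then (1:K) else 0)ᵀ l)
      = fun l => Pi.single (φ l) (1:K) := by
    funext l i
    simp [Pi.single_apply, Matrix.transpose]
  rw [h]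
  have hli := (Pi.basisFun K (Fin n)).linearIndependent
  have h2 : (fun l => Pi.single (φ l) (1:K)) = (fun j => (Pi.basisFun K (Fin n)) j) ∘ φ := by
    funext l
    simp [Pi.basisFun_apply]
  rw [h2]
  exact hli.comp φ hφ

lemma isUnit_blockTri {j k : ℕ}
    (N : Matrix (Fin (j+1) × Fin k) (Fin (j+1) × Fin k) F)
    (hN : ∀ p q : Fin (j+1) × Fin k, (q.1 : ℕ) < (p.1 : ℕ) → N p q = 0)
    (hD : ∀ t : Fin (j+1), IsUnit (Matrix.of fun a b : Fin k => N (t,a) (t,b)).det) :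
    IsUnit N.det := by
  classical
  have hbt : N.BlockTriangular Prod.fst := by
    intro p q hpq
    exact hN p q hpq
  rw [hbt.det_fintype]
  rw [isUnit_iff_ne_zero, Finset.prod_ne_zero_iff]
  intro t _
  let e : {p : Fin (j+1) × Fin k // p.1 = t} ≃ Fin k :=
    { toFun := fun p => p.1.2
      invFun := fun a => ⟨(t, a), rfl⟩
      left_inv := by rintro ⟨⟨pt, pa⟩, hp⟩; simp at hp; subst hp; rfl
      right_inv := fun a => rfl }
  have heq : N.toSquareBlock Prod.fst t
      = (Matrix.of fun a b : Fin k => N (t,a) (t,b)).submatrix e e := by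
    ext p q
    simp only [Matrix.toSquareBlock_def, Matrix.submatrix_apply, Matrix.of_apply]
    congr 1
    · exact Prod.ext p.2 rfl
    · exact Prod.ext q.2 rfl
  rw [heq, Matrix.det_submatrix_equiv_self]
  exact isUnit_iff_ne_zero.1 (hD t)

lemma exists_vecMul_eq {m : Type*} [Fintype m] [DecidableEq m]
    (N : Matrix m m F) (hN : IsUnit N.det) (y : m → F) :
    ∃ s : m → F, Matrix.vecMul s N = y := by
  refine ⟨Matrix.vecMul y N⁻¹, ?_⟩
  rw [Matrix.vecMul_vecMul, Matrix.nonsing_inv_mul N hN, Matrix.vecMul_one]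

lemma fin_sum_trunc {M : Type*} [AddCommMonoid M] {j : ℕ} (t : Fin (j+1)) (g : ℕ → M)
    (f : Fin (j+1) → M) (hf : ∀ i : Fin (j+1), f i = if (i:ℕ) ≤ (t:ℕ) then g (i:ℕ) else 0) :
    ∑ i, f i = ∑ i ∈ Finset.range ((t:ℕ)+1), g i := by
  calc ∑ i, f i
      = ∑ i ∈ Finset.range (j+1), (fun u : ℕ => if u ≤ (t:ℕ) then g u else 0) i := by
        rw [← Fin.sum_univ_eq_sum_range (fun u : ℕ => if u ≤ (t:ℕ) then g u else 0) (j+1)]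
        exact Finset.sum_congr rfl (fun i _ => hf i)
    _ = ∑ i ∈ Finset.range ((t:ℕ)+1), g i := by
        rw [← Finset.sum_subset (Finset.range_subset_range.2 (by omega : (t:ℕ)+1 ≤ j+1))]
        · exact Finset.sum_congr rfl (fun i hi => if_pos (by simp at hi; omega))
        · intro i _ hi
          exact if_neg (by simp at hi ⊢; omega)

lemma sum_filter_fin {j : ℕ} (f : Fin (j+1) → ℕ) (g : ℕ → ℕ)
    (hfg : ∀ i : Fin (j+1), f i = g (i : ℕ)) (t : Fin (j+1)) :
    ∑ i ∈ Finset.univ.filter (· ≤ t), f i = ∑ i ∈ Finset.range ((t:ℕ)+1), g i := by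
  rw [Finset.sum_filter]
  apply fin_sum_trunc
  intro i
  simp only [Fin.le_def, hfg]

lemma vecMul_GEX {k n : ℕ} (G : ℕ → Matrix (Fin k) (Fin n) F) {j : ℕ}
    (v : Fin (j+1) × Fin k → F) (sv : ℕ → Fin k → F)
    (hsv : ∀ (u : Fin (j+1)) (a : Fin k), sv (u : ℕ) a = v (u, a)) (t : Fin (j+1)) (c : Fin n) :
    Matrix.vecMul v (GEX G j) (t, c) = packet G sv t c := by
  classical
  set g : ℕ → F := fun u => ∑ a, sv u a * G ((t:ℕ) - u) a c with hg
  have hL : Matrix.vecMul v (GEX G j) (t, c)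
      = ∑ u ∈ Finset.range ((t:ℕ)+1), g u := by
    rw [vecMul_apply', Fintype.sum_prod_type]
    apply fin_sum_trunc
    intro u
    by_cases hu : (u:ℕ) ≤ (t:ℕ)
    · rw [if_pos hu, hg]
      apply Finset.sum_congr rfl
      intro a _
      rw [hsv u a, GEX]
      simp only [Matrix.of_apply, hu, if_true]
    · rw [if_neg hu]
      apply Finset.sum_eq_zero
      intro a _
      rw [GEX]
      simp only [Matrix.of_apply, hu, if_false, mul_zero]
  rw [hL, packet]
  have hR : ∀ i ∈ Finset.range ((t:ℕ)+1),
      Matrix.vecMul (sv ((t:ℕ) - i)) (G i) c = g ((t:ℕ) - i) := by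
    intro i hi
    simp only [Finset.mem_range] at hi
    rw [vecMul_apply', hg]
    apply Finset.sum_congr rfl
    intro a _
    congr 3
    omega
  rw [Finset.sum_apply, Finset.sum_congr rfl hR]
  have h2 := Finset.sum_range_reflect g ((t:ℕ)+1)
  rw [← h2]
  apply Finset.sum_congr rfl
  intro i hi
  congr 1

lemma packet_congr {k n : ℕ} (G : ℕ → Matrix (Fin k) (Fin n) F)
    (s1 s2 : ℕ → Fin k → F) (t : ℕ) (hs : ∀ u, u ≤ t → s1 u = s2 u) :
    packet G s1 t = packet G s2 t := by
  unfold packet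
  apply Finset.sum_congr rfl
  intro i hi
  rw [hs (t - i) (by omega)]

end Aux

section Greedy
variable (k : ℕ) (c : ℕ → ℕ)

noncomputable def PP (t : ℕ) : ℕ :=
  (Finset.range (t+1)).inf' Finset.nonempty_range_add_one
    (fun s => k*s + ∑ i ∈ Finset.Ico s t, c i)

lemma PP_zero : PP k c 0 = 0 := by simp [PP]

lemma PP_le {t s : ℕ} (hs : s ≤ t) : PP k c t ≤ k*s + ∑ i ∈ Finset.Ico s t, c i :=
  Finset.inf'_le _ (by simp only [Finset.mem_range]; omega)

lemma le_PP {t v : ℕ} (hv : ∀ s ≤ t, v ≤ k*s + ∑ i ∈ Finset.Ico s t, c i) : v ≤ PP k c t :=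
  Finset.le_inf' _ _ (fun s hs => hv s (by simp only [Finset.mem_range] at hs; omega))

lemma PP_le_k (t : ℕ) : PP k c t ≤ k*t := by
  have := PP_le k c (le_refl t)
  simpa using this

lemma PP_mono (t : ℕ) : PP k c t ≤ PP k c (t+1) := by
  apply le_PP
  intro s hs
  by_cases hst : s ≤ t
  · calc PP k c t ≤ k*s + ∑ i ∈ Finset.Ico s t, c i := PP_le k c hst
      _ ≤ k*s + ∑ i ∈ Finset.Ico s (t+1), c i := by
          gcongr
          omega
  · have hst' : s = t+1 := by omega
    subst hst'
    simp only [Finset.Ico_self, Finset.sum_empty, add_zero]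
    calc PP k c t ≤ k*t := PP_le_k k c t
      _ ≤ k*(t+1) := Nat.mul_le_mul_left k (by omega)

lemma PP_succ_le (t : ℕ) : PP k c (t+1) ≤ PP k c t + c t := by
  obtain ⟨s0, hs0, hval⟩ := Finset.exists_mem_eq_inf' (s := Finset.range (t+1))
    Finset.nonempty_range_add_one (fun s => k*s + ∑ i ∈ Finset.Ico s t, c i)
  simp only [Finset.mem_range] at hs0
  have h1 : PP k c (t+1) ≤ k*s0 + ∑ i ∈ Finset.Ico s0 (t+1), c i := PP_le k c (by omega)
  rw [Finset.sum_Ico_succ_top (by omega : s0 ≤ t)] at h1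
  have hval' : PP k c t = k*s0 + ∑ i ∈ Finset.Ico s0 t, c i := hval
  omega

lemma sum_PP_diff (T : ℕ) :
    ∑ i ∈ Finset.range T, (PP k c (i+1) - PP k c i) = PP k c T := by
  induction T with
  | zero => simp [PP_zero]
  | succ T ih =>
    rw [Finset.sum_range_succ, ih]
    have := PP_mono k c T
    omega

end Greedy

/-- Theorem 3, 2 ⇒ 1: if for every admissible choice of `ρ` and full-rank
`A*_t` the matrix `G^EX_j · diag(A*_0,…,A*_j)` is invertible, then `d_R(j)` attains the
Singleton bound `(n−k)(j+1)+1`. -/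
theorem stmt5 (q M k n m : ℕ) (hq : IsPrimePow q)
    (K F : Type*) [Field K] [Fintype K] [Field F] [Algebra K F]
    (hK : Fintype.card K = q) (hM : Module.finrank K F = M)
    (hk : 1 ≤ k) (hkn : k < n)
    (G : ℕ → Matrix (Fin k) (Fin n) F)
    (hG0 : (G 0).rank = k) (hGz : ∀ i, m < i → G i = 0)
    (j : ℕ)
    (h : ∀ ρ : Fin (j + 1) → ℕ, (∀ t, ρ t ≤ n) →
      (∀ t : Fin (j + 1), ∑ i ∈ Finset.univ.filter (· ≤ t), ρ i ≤ k * ((t : ℕ) + 1)) →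
      (∑ t, ρ t = k * (j + 1)) →
      ∀ A : (t : Fin (j + 1)) → Matrix (Fin n) (Fin (ρ t)) K,
        (∀ t, (A t).rank = ρ t) →
        Function.Bijective fun v : Fin (j + 1) × Fin k → F =>
          Matrix.vecMul v (GEX G j * (blockDiag A).map (algebraMap K F))) :
    dR K G j = (n - k) * (j + 1) + 1 := by
  classical
  obtain ⟨φ, hφ, hQ⟩ := exists_invertible_submatrix (G 0) hG0
  have hQdet : IsUnit (Matrix.of fun a l : Fin k => G 0 a (φ l)).det :=
    (Matrix.isUnit_iff_isUnit_det _).1 hQ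
  -- ===================== UPPER BOUND =====================
  set M' : Matrix (Fin (j+1) × Fin k) (Fin (j+1) × Fin k) F :=
    Matrix.of (fun p b => GEX G j p (b.1, φ b.2)) with hM'def
  have hM'det : IsUnit M'.det := by
    apply isUnit_blockTri
    · intro p q hpq
      show (if (p.1:ℕ) ≤ (q.1:ℕ) then G ((q.1:ℕ) - (p.1:ℕ)) p.2 (φ q.2) else 0) = 0
      rw [if_neg (by omega)]
    · intro t
      have hdq : (Matrix.of fun a b : Fin k => M' (t,a) (t,b))
          = Matrix.of fun a l : Fin k => G 0 a (φ l) := by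
        ext a b
        show (if (t:ℕ) ≤ (t:ℕ) then G ((t:ℕ) - (t:ℕ)) a (φ b) else 0) = G 0 a (φ b)
        simp
      rw [hdq]
      exact hQdet
  have hkk : k - 1 < k := by omega
  obtain ⟨sv, hsv⟩ := exists_vecMul_eq M' hM'det
    (fun b => if b.1 = (0 : Fin (j+1)) ∧ b.2 = (⟨k-1, hkk⟩ : Fin k) then (1:F) else 0)
  set s0 : ℕ → Fin k → F := fun u a => if hu : u < j+1 then sv (⟨u,hu⟩, a) else 0 with hs0def
  have hs0v : ∀ (u : Fin (j+1)) (a : Fin k), s0 (u:ℕ) a = sv (u, a) := by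
    intro u a
    simp only [hs0def, u.isLt, dif_pos, Fin.eta]
  have hpack0 : ∀ (t : Fin (j+1)) (c : Fin n),
      packet G s0 (t:ℕ) c = Matrix.vecMul sv (GEX G j) (t, c) :=
    fun t c => (vecMul_GEX G sv s0 hs0v t c).symm
  have hMGEX : ∀ (t : Fin (j+1)) (l : Fin k),
      Matrix.vecMul sv (GEX G j) (t, φ l) = Matrix.vecMul sv M' (t, l) := by
    intro t l
    rfl
  have hzero : ∀ (t : Fin (j+1)) (l : Fin k), ¬(t = 0 ∧ l = (⟨k-1, hkk⟩ : Fin k)) →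
      packet G s0 (t:ℕ) (φ l) = 0 := by
    intro t l hne
    rw [hpack0, hMGEX, hsv]
    exact if_neg hne
  have hvrank_tail : ∀ (t : Fin (j+1)), t ≠ 0 → vrank K (packet G s0 (t:ℕ)) ≤ n - k := by
    intro t ht
    have hb := vrank_le_of_zeros (K := K) (packet G s0 (t:ℕ)) (Finset.univ.image φ) ?_
    · rwa [Finset.card_image_of_injective _ hφ, Finset.card_univ, Fintype.card_fin] at hb
    · intro i hi
      simp only [Finset.mem_image, Finset.mem_univ, true_and] at hi
      obtain ⟨l, rfl⟩ := hi
      exact hzero t l (by tauto)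
  have hvrank0 : vrank K (packet G s0 0) ≤ n - (k-1) := by
    have hb := vrank_le_of_zeros (K := K) (packet G s0 ((0 : Fin (j+1)):ℕ))
      ((Finset.univ.erase (⟨k-1, hkk⟩ : Fin k)).image φ) ?_
    · rw [Finset.card_image_of_injective _ hφ, Finset.card_erase_of_mem (Finset.mem_univ _),
        Finset.card_univ, Fintype.card_fin] at hb
      simpa using hb
    · intro i hi
      simp only [Finset.mem_image, Finset.mem_erase, Finset.mem_univ, and_true] at hi
      obtain ⟨l, hl, rfl⟩ := hi
      exact hzero 0 l (by tauto)
  have hs00 : s0 0 ≠ 0 := by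
    intro hz
    have h1 : Matrix.vecMul sv M' ((0 : Fin (j+1)), (⟨k-1, hkk⟩ : Fin k)) = 1 := by
      rw [hsv]
      simp
    have h2 : Matrix.vecMul sv M' ((0:Fin (j+1)), (⟨k-1, hkk⟩ : Fin k)) = 0 := by
      rw [vecMul_apply', Fintype.sum_prod_type]
      apply Finset.sum_eq_zero
      intro u _
      by_cases hu : u = 0
      · subst hu
        apply Finset.sum_eq_zero
        intro a _
        have hsv0 : sv ((0 : Fin (j+1)), a) = s0 0 a := by
          rw [← hs0v 0 a, Fin.val_zero]
        rw [hsv0, hz]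
        simp
      · apply Finset.sum_eq_zero
        intro a _
        have hM0 : M' (u,a) ((0:Fin (j+1)), (⟨k-1, hkk⟩ : Fin k)) = 0 := by
          show (if (u:ℕ) ≤ ((0:Fin (j+1)):ℕ) then
            G (((0:Fin (j+1)):ℕ) - (u:ℕ)) a (φ ⟨k-1, hkk⟩) else 0) = 0
          rw [if_neg]
          rw [Fin.val_zero]
          have : (u:ℕ) ≠ 0 := fun hc => hu (Fin.ext (by simp [hc]))
          omega
        rw [hM0, mul_zero]
    rw [h1] at h2
    exact one_ne_zero h2
  have hsum : ∑ t ∈ Finset.range (j+1), vrank K (packet G s0 t) ≤ (n-k)*(j+1) + 1 := by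
    rw [Finset.sum_range_succ']
    have h1 : ∑ i ∈ Finset.range j, vrank K (packet G s0 (i+1)) ≤ (n-k) * j := by
      calc ∑ i ∈ Finset.range j, vrank K (packet G s0 (i+1))
          ≤ ∑ _i ∈ Finset.range j, (n-k) := by
            apply Finset.sum_le_sum
            intro i hi
            simp only [Finset.mem_range] at hi
            have ht := hvrank_tail ⟨i+1, by omega⟩ (by simp [Fin.ext_iff])
            exact ht
        _ = (n-k) * j := by rw [Finset.sum_const, Finset.card_range, smul_eq_mul, mul_comm]
    have h0 : vrank K (packet G s0 0) ≤ (n - k) + 1 := by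
      have := hvrank0
      omega
    calc ∑ i ∈ Finset.range j, vrank K (packet G s0 (i+1)) + vrank K (packet G s0 0)
        ≤ (n-k)*j + ((n-k) + 1) := add_le_add h1 h0
      _ = (n-k)*(j+1) + 1 := by ring
  have hub : dR K G j ≤ (n-k)*(j+1) + 1 := by
    have hmem : (∑ t ∈ Finset.range (j+1), vrank K (packet G s0 t)) ∈
        {d : ℕ | ∃ s : ℕ → Fin k → F, s 0 ≠ 0 ∧
          d = ∑ t ∈ Finset.range (j + 1), vrank K (packet G s t)} := ⟨s0, hs00, rfl⟩
    exact le_trans (Nat.sInf_le hmem) hsum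
  -- ===================== LOWER BOUND =====================
  have hlb : ∀ d ∈ {d : ℕ | ∃ s : ℕ → Fin k → F, s 0 ≠ 0 ∧
      d = ∑ t ∈ Finset.range (j + 1), vrank K (packet G s t)}, (n-k)*(j+1)+1 ≤ d := by
    rintro d ⟨s, hsne, rfl⟩
    by_contra hcon
    have hcon' : ∑ t ∈ Finset.range (j + 1), vrank K (packet G s t) ≤ (n-k)*(j+1) :=
      Nat.lt_succ_iff.mp (not_le.mp hcon)
    set r : ℕ → ℕ := fun t => vrank K (packet G s t) with hrdef
    have hrle : ∀ t, r t ≤ n := fun t => vrank_le_n _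
    set SR : ℕ → ℕ := fun t => ∑ i ∈ Finset.range (t+1), r i with hSRdef
    have hex : ∃ t, t ≤ j ∧ SR t ≤ (n-k)*(t+1) := ⟨j, le_rfl, hcon'⟩
    set tstar := Nat.find hex with htdef
    obtain ⟨htj, hSRt⟩ := Nat.find_spec hex
    have hmin : ∀ u, u < tstar → (n-k)*(u+1) + 1 ≤ SR u := by
      intro u hu
      have hnm := Nat.find_min hex hu
      push_neg at hnm
      exact Nat.succ_le_of_lt (hnm (by omega))
    set c' : ℕ → ℕ := fun t => n - r t with hc'def
    -- suffix sums of r are below the Singleton profile inside the window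
    have hIcoSum : ∀ s', s' ≤ tstar → ∑ i ∈ Finset.Ico s' (tstar+1), r i ≤ (n-k)*(tstar+1-s') := by
      intro s' hs'
      rcases Nat.eq_zero_or_pos s' with h0 | hpos
      · subst h0
        have hSRt' : ∑ i ∈ Finset.range (tstar+1), r i ≤ (n-k)*(tstar+1) := hSRt
        rw [show Finset.Ico 0 (tstar+1) = Finset.range (tstar+1) from by
          rw [Finset.range_eq_Ico], Nat.sub_zero]
        exact hSRt'
      · have hcons : ∑ i ∈ Finset.Ico 0 s', r i + ∑ i ∈ Finset.Ico s' (tstar+1), r i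
            = ∑ i ∈ Finset.Ico 0 (tstar+1), r i :=
          Finset.sum_Ico_consecutive _ (by omega) (by omega)
        have h1 : (n-k)*s' + 1 ≤ ∑ i ∈ Finset.Ico 0 s', r i := by
          have hm : (n-k)*((s'-1)+1) + 1 ≤ ∑ i ∈ Finset.range ((s'-1)+1), r i :=
            hmin (s'-1) (by omega)
          rwa [show (s'-1)+1 = s' by omega, Finset.range_eq_Ico] at hm
        have h2 : SR tstar = ∑ i ∈ Finset.Ico 0 (tstar+1), r i := by
          show (∑ i ∈ Finset.range (tstar+1), r i) = _
          rw [Finset.range_eq_Ico]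
        have hsplit : (n-k)*(tstar+1) = (n-k)*s' + (n-k)*(tstar+1-s') := by
          rw [← mul_add]
          congr 1
          omega
        rw [h2] at hSRt
        obtain ⟨X1, hX1⟩ : ∃ x, (n-k)*s' = x := ⟨_, rfl⟩
        obtain ⟨X2, hX2⟩ : ∃ x, (n-k)*(tstar+1-s') = x := ⟨_, rfl⟩
        obtain ⟨X3, hX3⟩ : ∃ x, (n-k)*(tstar+1) = x := ⟨_, rfl⟩
        rw [hX1] at h1 hsplit
        rw [hX2] at hsplit ⊢
        rw [hX3] at hsplit hSRt
        omega
    have hPPfull : PP k c' (tstar+1) = k*(tstar+1) := by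
      apply le_antisymm
      · have := PP_le k c' (le_refl (tstar+1))
        simpa using this
      · apply le_PP
        intro s' hs'
        rcases Nat.lt_or_ge s' (tstar+1) with hlt | hge
        · have hs'le : s' ≤ tstar := by omega
          have hr := hIcoSum s' hs'le
          have hcr : ∑ i ∈ Finset.Ico s' (tstar+1), c' i + ∑ i ∈ Finset.Ico s' (tstar+1), r i
              = n * (tstar+1-s') := by
            rw [← Finset.sum_add_distrib]
            have hterm : ∀ i ∈ Finset.Ico s' (tstar+1), c' i + r i = n := by
              intro i _
              have := hrle i
              simp only [hc'def]
              omega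
            rw [Finset.sum_congr rfl hterm, Finset.sum_const, Nat.card_Ico, smul_eq_mul,
              mul_comm]
          have hnsplit : n*(tstar+1-s') = (n-k)*(tstar+1-s') + k*(tstar+1-s') := by
            rw [← add_mul]
            congr 1
            omega
          have hksplit : k*(tstar+1) = k*s' + k*(tstar+1-s') := by
            rw [← mul_add]
            congr 1
            omega
          obtain ⟨Y1, hY1⟩ : ∃ x, (n-k)*(tstar+1-s') = x := ⟨_, rfl⟩
          obtain ⟨Y2, hY2⟩ : ∃ x, k*(tstar+1-s') = x := ⟨_, rfl⟩
          obtain ⟨Y3, hY3⟩ : ∃ x, n*(tstar+1-s') = x := ⟨_, rfl⟩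
          obtain ⟨Y4, hY4⟩ : ∃ x, k*(tstar+1) = x := ⟨_, rfl⟩
          obtain ⟨Y5, hY5⟩ : ∃ x, k*s' = x := ⟨_, rfl⟩
          rw [hY1] at hr hnsplit
          rw [hY2] at hnsplit hksplit
          rw [hY3] at hnsplit hcr
          rw [hY4] at hksplit ⊢
          rw [hY5] at hksplit ⊢
          omega
        · have hs'eq : s' = tstar+1 := by omega
          subst hs'eq
          simp
    set ρg : ℕ → ℕ := fun u => PP k c' (u+1) - PP k c' u with hρgdef
    have hρg_le : ∀ u, ρg u ≤ c' u := by
      intro u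
      have h1 := PP_succ_le k c' u
      have h2 := PP_mono k c' u
      simp only [hρgdef]
      omega
    set ρN : ℕ → ℕ := fun u => if u ≤ tstar then ρg u else k with hρNdef
    have hsum_ρN : ∀ T, ∑ i ∈ Finset.range (T+1), ρN i
        = if T ≤ tstar then PP k c' (T+1) else k*(T+1) := by
      intro T
      induction T with
      | zero =>
        rw [Finset.sum_range_one, if_pos (Nat.zero_le _)]
        have h0 : ρN 0 = ρg 0 := if_pos (Nat.zero_le _)
        rw [h0]
        simp only [hρgdef]
        rw [PP_zero]
        omega
      | succ T ih =>
        rw [Finset.sum_range_succ, ih]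
        by_cases hT1 : T+1 ≤ tstar
        · have hT : T ≤ tstar := by omega
          rw [if_pos hT, if_pos hT1]
          have hρ1 : ρN (T+1) = ρg (T+1) := if_pos hT1
          rw [hρ1]
          simp only [hρgdef]
          have := PP_mono k c' (T+1)
          have := PP_succ_le k c' (T+1)
          omega
        · rw [if_neg hT1]
          have hρk : ρN (T+1) = k := if_neg hT1
          rw [hρk]
          by_cases hT : T ≤ tstar
          · have hTeq : T = tstar := by omega
            rw [if_pos hT, hTeq, hPPfull]
            ring
          · rw [if_neg hT]
            ring
    have hρN_le_n : ∀ u, ρN u ≤ n := by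
      intro u
      simp only [hρNdef]
      split
      · refine le_trans (hρg_le u) ?_
        simp only [hc'def]
        omega
      · omega
    have hpre : ∀ T, ∑ i ∈ Finset.range (T+1), ρN i ≤ k*(T+1) := by
      intro T
      rw [hsum_ρN]
      split
      · exact PP_le_k k c' (T+1)
      · exact le_rfl
    have htotal : ∑ i ∈ Finset.range (j+1), ρN i = k*(j+1) := by
      rw [hsum_ρN]
      split
      · next hjt =>
        have hteq : tstar = j := le_antisymm htj hjt
        rw [← hteq, hPPfull]
      · rfl
    have hcond1 : ∀ t : Fin (j+1), ρN (t:ℕ) ≤ n := fun t => hρN_le_n _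
    have hcond2 : ∀ t : Fin (j+1),
        ∑ i ∈ Finset.univ.filter (· ≤ t), ρN (i:ℕ) ≤ k*((t:ℕ)+1) := by
      intro t
      rw [sum_filter_fin (fun i : Fin (j+1) => ρN (i:ℕ)) ρN (fun i => rfl) t]
      exact hpre (t:ℕ)
    have hcond3 : ∑ t : Fin (j+1), ρN (t:ℕ) = k*(j+1) := by
      rw [Fin.sum_univ_eq_sum_range ρN (j+1)]
      exact htotal
    -- construction of the annihilating block matrices
    have hAex : ∀ t : Fin (j+1), ∃ A : Matrix (Fin n) (Fin (ρN (t:ℕ))) K,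
        A.rank = ρN (t:ℕ) ∧
        ∀ w : Fin n → F,
          (((t:ℕ) ≤ tstar ∧ w = packet G s (t:ℕ)) ∨
            (tstar < (t:ℕ) ∧ ∀ l : Fin k, w (φ l) = 0)) →
          ∀ l, ∑ i, w i * algebraMap K F (A i l) = 0 := by
      intro t
      by_cases htt : (t:ℕ) ≤ tstar
      · have e : ρN (t:ℕ) = ρg (t:ℕ) := if_pos htt
        rw [e]
        have hρr : ρg (t:ℕ) + vrank K (packet G s (t:ℕ)) ≤ n := by
          have h1 := hρg_le (t:ℕ)
          have h2 := hrle (t:ℕ)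
          have h3 : r (t:ℕ) = vrank K (packet G s (t:ℕ)) := rfl
          simp only [hc'def] at h1
          omega
        obtain ⟨A, hAr, hAz⟩ := exists_annihilator (K := K) (packet G s (t:ℕ)) hρr
        refine ⟨A, hAr, ?_⟩
        rintro w (⟨_, rfl⟩ | ⟨hlt, _⟩)
        · exact hAz
        · omega
      · have e : ρN (t:ℕ) = k := if_neg htt
        rw [e]
        refine ⟨Matrix.of fun i l => if i = φ l then (1:K) else 0, rank_selection φ hφ, ?_⟩
        rintro w (⟨hle, _⟩ | ⟨_, hw⟩)
        · omega
        · intro l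
          have hterm : ∀ i : Fin n,
              w i * algebraMap K F ((Matrix.of fun (i : Fin n) (l : Fin k) =>
                if i = φ l then (1:K) else 0) i l)
              = if i = φ l then w i else 0 := by
            intro i
            show w i * algebraMap K F (if i = φ l then (1:K) else 0) = _
            split_ifs <;> simp
          rw [Finset.sum_congr rfl (fun i _ => hterm i),
            Finset.sum_ite_eq' Finset.univ (φ l) w]
          simp [hw l]
    choose A hA1 hA2 using hAex
    -- the auxiliary invertible system
    set N : Matrix (Fin (j+1) × Fin k) (Fin (j+1) × Fin k) F :=
      Matrix.of (fun p b =>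
        if (b.1:ℕ) ≤ tstar then (if p = b then (1:F) else 0)
        else GEX G j p (b.1, φ b.2)) with hNdef
    have hNdet : IsUnit N.det := by
      apply isUnit_blockTri
      · intro p b hpb
        show (if (b.1:ℕ) ≤ tstar then (if p = b then (1:F) else 0)
          else (if (p.1:ℕ) ≤ (b.1:ℕ) then G ((b.1:ℕ) - (p.1:ℕ)) p.2 (φ b.2) else 0)) = 0
        split_ifs with h1 h2 h3
        · exfalso
          rw [h2] at hpb
          omega
        · rfl
        · omega
        · rfl
      · intro t
        by_cases htt : (t:ℕ) ≤ tstar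
        · have hid : (Matrix.of fun a b : Fin k => N (t,a) (t,b))
              = (1 : Matrix (Fin k) (Fin k) F) := by
            ext a b
            show (if (t:ℕ) ≤ tstar then (if ((t,a) : Fin (j+1) × Fin k) = (t,b) then (1:F) else 0)
              else (if (t:ℕ) ≤ (t:ℕ) then G ((t:ℕ) - (t:ℕ)) a (φ b) else 0))
              = (1 : Matrix (Fin k) (Fin k) F) a b
            rw [if_pos htt]
            simp [Prod.ext_iff, Matrix.one_apply]
          rw [hid]
          simp
        · have hgq : (Matrix.of fun a b : Fin k => N (t,a) (t,b))
              = Matrix.of fun a l : Fin k => G 0 a (φ l) := by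
            ext a b
            show (if (t:ℕ) ≤ tstar then (if ((t,a) : Fin (j+1) × Fin k) = (t,b) then (1:F) else 0)
              else (if (t:ℕ) ≤ (t:ℕ) then G ((t:ℕ) - (t:ℕ)) a (φ b) else 0)) = G 0 a (φ b)
            rw [if_neg htt]
            simp
          rw [hgq]
          exact hQdet
    obtain ⟨sv', hsv'⟩ := exists_vecMul_eq N hNdet
      (fun b => if (b.1:ℕ) ≤ tstar then s (b.1:ℕ) b.2 else 0)
    have hagree : ∀ (u : Fin (j+1)) (a : Fin k), (u:ℕ) ≤ tstar → sv' (u, a) = s (u:ℕ) a := by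
      intro u a hu
      have h1 := congrFun hsv' (u, a)
      rw [vecMul_apply'] at h1
      dsimp only at h1
      have h2 : ∀ p : Fin (j+1) × Fin k,
          sv' p * N p (u,a) = if p = (u,a) then sv' p else 0 := by
        intro p
        show sv' p * (if ((u:ℕ)) ≤ tstar then (if p = (u,a) then (1:F) else 0)
          else (if (p.1:ℕ) ≤ (u:ℕ) then G ((u:ℕ) - (p.1:ℕ)) p.2 (φ a) else 0)) = _
        rw [if_pos hu]
        split_ifs <;> simp
      rw [Finset.sum_congr rfl (fun p _ => h2 p),
        Finset.sum_ite_eq' Finset.univ ((u,a) : Fin (j+1) × Fin k) sv'] at h1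
      simp only [Finset.mem_univ, if_true] at h1
      rw [h1, if_pos hu]
    have hzero_tail : ∀ (u : Fin (j+1)) (l : Fin k), tstar < (u:ℕ) →
        Matrix.vecMul sv' (GEX G j) (u, φ l) = 0 := by
      intro u l hu
      have h1 := congrFun hsv' (u, l)
      rw [vecMul_apply'] at h1
      dsimp only at h1
      have h2 : ∀ p : Fin (j+1) × Fin k, sv' p * N p (u,l) = sv' p * GEX G j p (u, φ l) := by
        intro p
        show sv' p * (if ((u:ℕ)) ≤ tstar then (if p = (u,l) then (1:F) else 0)
          else GEX G j p (u, φ l)) = _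
        rw [if_neg (by omega)]
      rw [Finset.sum_congr rfl (fun p _ => h2 p)] at h1
      rw [if_neg (show ¬((u:ℕ) ≤ tstar) by omega)] at h1
      rw [vecMul_apply']
      exact h1
    set s' : ℕ → Fin k → F := fun u a => if hu : u < j+1 then sv' (⟨u,hu⟩, a) else 0 with hs'def
    have hs'v : ∀ (u : Fin (j+1)) (a : Fin k), s' (u:ℕ) a = sv' (u, a) := by
      intro u a
      simp only [hs'def, u.isLt, dif_pos, Fin.eta]
    have hXpack : ∀ (t : Fin (j+1)) (cc : Fin n),
        Matrix.vecMul sv' (GEX G j) (t, cc) = packet G s' (t:ℕ) cc :=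
      fun t cc => vecMul_GEX G sv' s' hs'v t cc
    have hpackagree : ∀ (t : Fin (j+1)), (t:ℕ) ≤ tstar →
        packet G s' (t:ℕ) = packet G s (t:ℕ) := by
      intro t ht
      apply packet_congr
      intro u hu
      funext a
      have hult : u < j+1 := by omega
      have hsu : s' u a = sv' (⟨u, hult⟩, a) := by
        simp only [hs'def, hult, dif_pos]
      rw [hsu]
      exact hagree ⟨u, hult⟩ a (le_trans hu ht)
    have hbij := h (fun t => ρN (t:ℕ)) hcond1 hcond2 hcond3 A hA1
    have hvm0 : Matrix.vecMul sv' (GEX G j * (blockDiag A).map (algebraMap K F)) = 0 := by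
      rw [← Matrix.vecMul_vecMul]
      funext col
      obtain ⟨u, l⟩ := col
      rw [Pi.zero_apply, vecMul_apply', Fintype.sum_prod_type]
      apply Finset.sum_eq_zero
      intro t1 _
      by_cases ht1 : t1 = u
      · subst ht1
        have hinner : ∀ i : Fin n,
            Matrix.vecMul sv' (GEX G j) (t1, i) *
              ((blockDiag A).map (algebraMap K F)) (t1, i) ⟨t1, l⟩
            = packet G s' (t1:ℕ) i * algebraMap K F (A t1 i l) := by
          intro i
          rw [hXpack t1 i]
          show packet G s' (t1:ℕ) i * algebraMap K F (if t1 = t1 then A t1 i l else 0) = _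
          rw [if_pos rfl]
        rw [Finset.sum_congr rfl (fun i _ => hinner i)]
        by_cases hu : (t1:ℕ) ≤ tstar
        · rw [hpackagree t1 hu]
          exact hA2 t1 (packet G s (t1:ℕ)) (Or.inl ⟨hu, rfl⟩) l
        · refine hA2 t1 (packet G s' (t1:ℕ)) (Or.inr ⟨not_le.mp hu, ?_⟩) l
          intro l'
          rw [← hXpack t1 (φ l')]
          exact hzero_tail t1 l' (not_le.mp hu)
      · apply Finset.sum_eq_zero
        intro i _
        show Matrix.vecMul sv' (GEX G j) (t1, i) *
          algebraMap K F (if t1 = u then A u i l else 0) = 0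
        rw [if_neg ht1]
        simp
    obtain ⟨a0, ha0⟩ : ∃ a, s 0 a ≠ 0 := by
      by_contra hno
      push_neg at hno
      exact hsne (funext hno)
    have hsv'ne : sv' ≠ 0 := by
      intro h0
      have hag := hagree 0 a0 (by simp)
      rw [h0] at hag
      simp only [Pi.zero_apply, Fin.val_zero] at hag
      exact ha0 hag.symm
    have hzz : sv' = 0 := by
      apply hbij.injective
      show Matrix.vecMul sv' _ = Matrix.vecMul 0 _
      rw [Matrix.zero_vecMul, hvm0]
    exact hsv'ne hzz
  -- ===================== conclusion =====================
  have hne : {d : ℕ | ∃ s : ℕ → Fin k → F, s 0 ≠ 0 ∧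
      d = ∑ t ∈ Finset.range (j + 1), vrank K (packet G s t)}.Nonempty :=
    ⟨_, ⟨s0, hs00, rfl⟩⟩
  exact le_antisymm hub (le_csInf hne hlb)
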